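/- Let μ = (μ₁,…,μ_m) and λ = (λ₁,…,λ_n) be probability vectors, ω₁ and ω₂ two weight functions with respect to μ and λ, x₁,…,xₙ nonnegative real numbers, and p ≥ 1. Then ∑_{j=1}^n λⱼ^p xⱼ^p ≤ ∑_{i=1}^m ∑_{j=1}^n μᵢ L_p^p(ω₁(i,j)λⱼxⱼ, ω₂(i,j)λⱼxⱼ) ≤ ∑_{j=1}^n λⱼxⱼ^p. -/

import Mathlib

open Finset

/-- The `p`-th power of the `p`-logarithmic mean:
`L_p^p(a,b) = (b^{p+1} - a^{p+1})/((p+1)(b-a))` for `a ≠ b`, and `a^p` for `a = b`. -/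
noncomputable def LpPowP (p a b : ℝ) : ℝ :=
  if a = b then a ^ p else (b ^ (p + 1) - a ^ (p + 1)) / ((p + 1) * (b - a))

open MeasureTheory intervalIntegral in
lemma lpPowP_eq_integral {p a b : ℝ} (hp : 1 ≤ p) (hab : a < b) :
    LpPowP p a b = (∫ t in a..b, t ^ p) / (b - a) := by
  rw [LpPowP, if_neg hab.ne, integral_rpow (Or.inl (by linarith)), div_div]

lemma lpPowP_comm (p a b : ℝ) : LpPowP p a b = LpPowP p b a := by
  unfold LpPowP
  rcases eq_or_ne a b with h | h
  · simp [h]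
  · rw [if_neg h, if_neg (Ne.symm h), ← neg_div_neg_eq]
    ring_nf

lemma rpow_le_self_of_le_one {y p : ℝ} (hy0 : 0 ≤ y) (hy1 : y ≤ 1) (hp : 1 ≤ p) :
    y ^ p ≤ y := by
  rcases eq_or_lt_of_le hy0 with h | h
  · rw [← h, Real.zero_rpow (by linarith)]
  · calc y ^ p ≤ y ^ (1 : ℝ) := Real.rpow_le_rpow_of_exponent_ge h hy1 hp
      _ = y := Real.rpow_one y

open MeasureTheory intervalIntegral in
lemma lpPowP_lower_lt {p a b : ℝ} (hp : 1 ≤ p) (ha : 0 ≤ a) (hab : a < b) :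
    ((a + b) / 2) ^ p ≤ LpPowP p a b := by
  have hp0 : 0 < p := by linarith
  have hc : Continuous fun t : ℝ => t ^ p := by
    rw [continuous_iff_continuousAt]
    exact fun t => Real.continuousAt_rpow_const t p (Or.inr hp0.le)
  have hint : IntervalIntegrable (fun t : ℝ => t ^ p) volume a b :=
    hc.intervalIntegrable a b
  have hint2 : IntervalIntegrable (fun t : ℝ => (a + b - t) ^ p) volume a b :=
    (hc.comp (continuous_const.sub continuous_id)).intervalIntegrable a b
  have key : ∀ t ∈ Set.Icc a b, 2 * ((a + b) / 2) ^ p ≤ t ^ p + (a + b - t) ^ p := by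
    intro t ht
    have h1 : (0 : ℝ) ≤ t := le_trans ha ht.1
    have h2 : (0 : ℝ) ≤ a + b - t := by have := ht.2; linarith
    have h := (convexOn_rpow hp).2 (Set.mem_Ici.2 h1) (Set.mem_Ici.2 h2)
      (by norm_num : (0:ℝ) ≤ 1/2) (by norm_num : (0:ℝ) ≤ 1/2) (by norm_num)
    simp only [smul_eq_mul] at h
    have he : (1 / 2 : ℝ) * t + (1 / 2 : ℝ) * (a + b - t) = (a + b) / 2 := by ring
    rw [he] at h
    linarith
  have hI : (∫ t in a..b, (a + b - t) ^ p) = ∫ t in a..b, t ^ p := by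
    have h := intervalIntegral.integral_comp_sub_left (a := a) (b := b) (fun t : ℝ => t ^ p) (a + b)
    simpa using h
  have hmono : (∫ _ in a..b, 2 * ((a + b) / 2) ^ p) ≤
      ∫ t in a..b, (t ^ p + (a + b - t) ^ p) :=
    intervalIntegral.integral_mono_on hab.le intervalIntegrable_const (hint.add hint2) key
  rw [intervalIntegral.integral_const, intervalIntegral.integral_add hint hint2, hI,
    smul_eq_mul] at hmono
  rw [lpPowP_eq_integral hp hab, le_div_iff₀ (by linarith)]
  nlinarith [hmono]

open MeasureTheory intervalIntegral in
lemma lpPowP_upper_lt {p a b : ℝ} (hp : 1 ≤ p) (ha : 0 ≤ a) (hab : a < b) :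
    LpPowP p a b ≤ (a ^ p + b ^ p) / 2 := by
  have hp0 : 0 < p := by linarith
  have hba : (0 : ℝ) < b - a := by linarith
  have hc : Continuous fun t : ℝ => t ^ p := by
    rw [continuous_iff_continuousAt]
    exact fun t => Real.continuousAt_rpow_const t p (Or.inr hp0.le)
  have hint : IntervalIntegrable (fun t : ℝ => t ^ p) volume a b :=
    hc.intervalIntegrable a b
  set c₁ : ℝ := (b * a ^ p - a * b ^ p) / (b - a) with hc₁
  set c₂ : ℝ := (b ^ p - a ^ p) / (b - a) with hc₂
  have key : ∀ t ∈ Set.Icc a b, t ^ p ≤ c₁ + c₂ * t := by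
    intro t ht
    have hu : (0 : ℝ) ≤ (b - t) / (b - a) := div_nonneg (by linarith [ht.2]) hba.le
    have hv : (0 : ℝ) ≤ (t - a) / (b - a) := div_nonneg (by linarith [ht.1]) hba.le
    have huv : (b - t) / (b - a) + (t - a) / (b - a) = 1 := by field_simp; ring
    have h := (convexOn_rpow hp).2 (Set.mem_Ici.2 ha) (Set.mem_Ici.2 (ha.trans hab.le))
      hu hv huv
    simp only [smul_eq_mul] at h
    have he : (b - t) / (b - a) * a + (t - a) / (b - a) * b = t := by
      field_simp; ring
    rw [he] at h
    calc t ^ p ≤ (b - t) / (b - a) * a ^ p + (t - a) / (b - a) * b ^ p := h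
      _ = c₁ + c₂ * t := by rw [hc₁, hc₂]; field_simp; ring
  have hint2 : IntervalIntegrable (fun t : ℝ => c₁ + c₂ * t) volume a b :=
    (continuous_const.add (continuous_const.mul continuous_id)).intervalIntegrable a b
  have hmono : (∫ t in a..b, t ^ p) ≤ ∫ t in a..b, (c₁ + c₂ * t) :=
    intervalIntegral.integral_mono_on hab.le hint hint2 key
  have hint3 : IntervalIntegrable (fun t : ℝ => c₂ * t) volume a b := by
    exact (continuous_const.mul continuous_id).intervalIntegrable a b
  have hint4 : IntervalIntegrable (fun _ : ℝ => c₁) volume a b := intervalIntegrable_const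
  have hval : (∫ t in a..b, (c₁ + c₂ * t)) = (b - a) * c₁ + c₂ * ((b ^ 2 - a ^ 2) / 2) := by
    rw [intervalIntegral.integral_add hint4 hint3,
      intervalIntegral.integral_const, intervalIntegral.integral_const_mul, integral_id,
      smul_eq_mul]
  rw [hval] at hmono
  have heq : (b - a) * c₁ + c₂ * ((b ^ 2 - a ^ 2) / 2) = (a ^ p + b ^ p) / 2 * (b - a) := by
    rw [hc₁, hc₂]; field_simp; ring
  rw [lpPowP_eq_integral hp hab, div_le_iff₀ hba]
  linarith

lemma lpPowP_lower {p a b : ℝ} (hp : 1 ≤ p) (ha : 0 ≤ a) (hb : 0 ≤ b) :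
    ((a + b) / 2) ^ p ≤ LpPowP p a b := by
  rcases lt_trichotomy a b with h | h | h
  · exact lpPowP_lower_lt hp ha h
  · subst h
    rw [LpPowP, if_pos rfl, show (a + a) / 2 = a by ring]
  · rw [lpPowP_comm, add_comm]
    exact lpPowP_lower_lt hp hb h

lemma lpPowP_upper {p a b : ℝ} (hp : 1 ≤ p) (ha : 0 ≤ a) (hb : 0 ≤ b) :
    LpPowP p a b ≤ (a ^ p + b ^ p) / 2 := by
  rcases lt_trichotomy a b with h | h | h
  · exact lpPowP_upper_lt hp ha h
  · subst h
    rw [LpPowP, if_pos rfl]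
    linarith
  · rw [lpPowP_comm, add_comm]
    exact lpPowP_upper_lt hp hb h

/-- For nonnegative reals `x₁,…,xₙ` and `p ≥ 1`:
`∑ⱼλⱼ^p xⱼ^p ≤ ∑ᵢ∑ⱼ μᵢ L_p^p(ω₁(i,j)λⱼxⱼ, ω₂(i,j)λⱼxⱼ) ≤ ∑ⱼλⱼxⱼ^p`. -/
theorem power_sum_refinement_two_weights
    (p : ℝ) (hp : 1 ≤ p)
    {m n : ℕ} (μ : Fin m → ℝ) (lam : Fin n → ℝ)
    (hμ0 : ∀ i, 0 ≤ μ i) (hμ1 : ∑ i, μ i = 1)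
    (hlam0 : ∀ j, 0 ≤ lam j) (hlam1 : ∑ j, lam j = 1)
    (ω₁ ω₂ : Fin m → Fin n → ℝ)
    (hω₁0 : ∀ i j, 0 ≤ ω₁ i j) (hω₁μ : ∀ j, ∑ i, ω₁ i j * μ i = 1)
    (hω₁lam : ∀ i, ∑ j, ω₁ i j * lam j = 1)
    (hω₂0 : ∀ i j, 0 ≤ ω₂ i j) (hω₂μ : ∀ j, ∑ i, ω₂ i j * μ i = 1)
    (hω₂lam : ∀ i, ∑ j, ω₂ i j * lam j = 1)
    (x : Fin n → ℝ) (hx : ∀ j, 0 ≤ x j) :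
    (∑ j, lam j ^ p * x j ^ p) ≤
        ∑ i, ∑ j, μ i * LpPowP p (ω₁ i j * lam j * x j) (ω₂ i j * lam j * x j) ∧
      (∑ i, ∑ j, μ i * LpPowP p (ω₁ i j * lam j * x j) (ω₂ i j * lam j * x j)) ≤
        ∑ j, lam j * x j ^ p := by
  set c : Fin n → ℝ := fun j => lam j * x j with hcdef
  have hc0 : ∀ j, 0 ≤ c j := fun j => mul_nonneg (hlam0 j) (hx j)
  constructor
  · -- lower bound
    rw [Finset.sum_comm]
    apply Finset.sum_le_sum
    intro j _
    have h1 : lam j ^ p * x j ^ p = c j ^ p := (Real.mul_rpow (hlam0 j) (hx j)).symm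
    have h2 : ∑ i, μ i * ((ω₁ i j + ω₂ i j) / 2 * c j) = c j := by
      have hterm : ∀ i, μ i * ((ω₁ i j + ω₂ i j) / 2 * c j)
          = (ω₁ i j * μ i) * (c j / 2) + (ω₂ i j * μ i) * (c j / 2) := fun i => by ring
      rw [Finset.sum_congr rfl fun i _ => hterm i, Finset.sum_add_distrib,
        ← Finset.sum_mul, ← Finset.sum_mul, hω₁μ j, hω₂μ j]
      ring
    have h3 : c j ^ p ≤ ∑ i, μ i * ((ω₁ i j + ω₂ i j) / 2 * c j) ^ p := by
      have := Real.rpow_arith_mean_le_arith_mean_rpow Finset.univ μ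
        (fun i => (ω₁ i j + ω₂ i j) / 2 * c j) (fun i _ => hμ0 i) hμ1
        (fun i _ => mul_nonneg
          (div_nonneg (add_nonneg (hω₁0 i j) (hω₂0 i j)) (by norm_num)) (hc0 j)) hp
      calc c j ^ p = (∑ i, μ i * ((ω₁ i j + ω₂ i j) / 2 * c j)) ^ p := by rw [h2]
        _ ≤ _ := this
    have h4 : ∀ i, ((ω₁ i j + ω₂ i j) / 2 * c j) ^ p ≤
        LpPowP p (ω₁ i j * lam j * x j) (ω₂ i j * lam j * x j) := by
      intro i
      have ha : 0 ≤ ω₁ i j * c j := mul_nonneg (hω₁0 i j) (hc0 j)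
      have hb : 0 ≤ ω₂ i j * c j := mul_nonneg (hω₂0 i j) (hc0 j)
      have hL := lpPowP_lower hp ha hb
      rw [show ω₁ i j * lam j * x j = ω₁ i j * c j from mul_assoc _ _ _,
        show ω₂ i j * lam j * x j = ω₂ i j * c j from mul_assoc _ _ _,
        show (ω₁ i j + ω₂ i j) / 2 * c j = (ω₁ i j * c j + ω₂ i j * c j) / 2 by ring]
      exact hL
    calc lam j ^ p * x j ^ p = c j ^ p := h1
      _ ≤ ∑ i, μ i * ((ω₁ i j + ω₂ i j) / 2 * c j) ^ p := h3
      _ ≤ ∑ i, μ i * LpPowP p (ω₁ i j * lam j * x j) (ω₂ i j * lam j * x j) :=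
          Finset.sum_le_sum fun i _ => mul_le_mul_of_nonneg_left (h4 i) (hμ0 i)
  · -- upper bound
    have step : ∀ i j, LpPowP p (ω₁ i j * lam j * x j) (ω₂ i j * lam j * x j)
        ≤ (ω₁ i j * lam j + ω₂ i j * lam j) / 2 * x j ^ p := by
      intro i j
      have ha : 0 ≤ ω₁ i j * lam j * x j :=
        mul_nonneg (mul_nonneg (hω₁0 i j) (hlam0 j)) (hx j)
      have hb : 0 ≤ ω₂ i j * lam j * x j :=
        mul_nonneg (mul_nonneg (hω₂0 i j) (hlam0 j)) (hx j)
      have hU := lpPowP_upper hp ha hb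
      have hb1 : ω₁ i j * lam j ≤ 1 := by
        have hs := Finset.single_le_sum (f := fun j' => ω₁ i j' * lam j')
          (fun j' _ => mul_nonneg (hω₁0 i j') (hlam0 j')) (Finset.mem_univ j)
        rw [hω₁lam i] at hs; exact hs
      have hb2 : ω₂ i j * lam j ≤ 1 := by
        have hs := Finset.single_le_sum (f := fun j' => ω₂ i j' * lam j')
          (fun j' _ => mul_nonneg (hω₂0 i j') (hlam0 j')) (Finset.mem_univ j)
        rw [hω₂lam i] at hs; exact hs
      have e1 : (ω₁ i j * lam j * x j) ^ p ≤ ω₁ i j * lam j * x j ^ p := by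
        rw [Real.mul_rpow (mul_nonneg (hω₁0 i j) (hlam0 j)) (hx j)]
        exact mul_le_mul_of_nonneg_right
          (rpow_le_self_of_le_one (mul_nonneg (hω₁0 i j) (hlam0 j)) hb1 hp)
          (Real.rpow_nonneg (hx j) p)
      have e2 : (ω₂ i j * lam j * x j) ^ p ≤ ω₂ i j * lam j * x j ^ p := by
        rw [Real.mul_rpow (mul_nonneg (hω₂0 i j) (hlam0 j)) (hx j)]
        exact mul_le_mul_of_nonneg_right
          (rpow_le_self_of_le_one (mul_nonneg (hω₂0 i j) (hlam0 j)) hb2 hp)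
          (Real.rpow_nonneg (hx j) p)
      calc LpPowP p (ω₁ i j * lam j * x j) (ω₂ i j * lam j * x j)
          ≤ ((ω₁ i j * lam j * x j) ^ p + (ω₂ i j * lam j * x j) ^ p) / 2 := hU
        _ ≤ (ω₁ i j * lam j + ω₂ i j * lam j) / 2 * x j ^ p := by
            rw [show (ω₁ i j * lam j + ω₂ i j * lam j) / 2 * x j ^ p
              = (ω₁ i j * lam j * x j ^ p + ω₂ i j * lam j * x j ^ p) / 2 by ring]
            linarith
    calc (∑ i, ∑ j, μ i * LpPowP p (ω₁ i j * lam j * x j) (ω₂ i j * lam j * x j))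
        ≤ ∑ i, ∑ j, μ i * ((ω₁ i j * lam j + ω₂ i j * lam j) / 2 * x j ^ p) :=
          Finset.sum_le_sum fun i _ => Finset.sum_le_sum fun j _ =>
            mul_le_mul_of_nonneg_left (step i j) (hμ0 i)
      _ = ∑ j, lam j * x j ^ p := by
          rw [Finset.sum_comm]
          apply Finset.sum_congr rfl
          intro j _
          have hterm : ∀ i, μ i * ((ω₁ i j * lam j + ω₂ i j * lam j) / 2 * x j ^ p)
              = (ω₁ i j * μ i) * (lam j * x j ^ p / 2)
                + (ω₂ i j * μ i) * (lam j * x j ^ p / 2) := fun i => by ring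
          rw [Finset.sum_congr rfl fun i _ => hterm i, Finset.sum_add_distrib,
            ← Finset.sum_mul, ← Finset.sum_mul, hω₁μ j, hω₂μ j]
          ring
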